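/- Let R > 0 and let m be the arc-length measure of the circle of radius R centred at the origin in ℝ², i.e. the pushforward under θ ↦ (R cos θ, R sin θ) of R times Lebesgue measure on [0, 2π). Then m belongs to the generalized Kato class: lim_{ε→0⁺} sup_{x∈ℝ²} ∫_{B(x,ε)} |ln|x−y|| m(dy) = 0. -/

import Mathlib

open MeasureTheory Filter Set Real

noncomputable section

/-- The plane `ℝ²` as a Euclidean space. -/
abbrev Plane := EuclideanSpace ℝ (Fin 2)

/-- A positive Borel measure `m` on `ℝ²` belongs to the generalized Kato class if
`lim_{ε→0⁺} sup_{x∈ℝ²} ∫_{B(x,ε)} |ln|x−y|| m(dy) = 0`. -/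
def GenKatoClass (m : Measure Plane) : Prop :=
  Tendsto (fun ε : ℝ => ⨆ x : Plane,
      ∫⁻ y in Metric.ball x ε, ENNReal.ofReal |Real.log (dist x y)| ∂m)
    (nhdsWithin 0 (Set.Ioi 0)) (nhds 0)

namespace CK

lemma neg_log_le_rpow {s : ℝ} (hs : 0 < s) : -Real.log s ≤ 2 * s ^ (-(1/2) : ℝ) := by
  have h1 : Real.log s = 2 * Real.log (Real.sqrt s) := by
    rw [Real.log_sqrt hs.le]; ring
  have hsq : 0 < Real.sqrt s := Real.sqrt_pos.mpr hs
  have h2 : Real.log (Real.sqrt s)⁻¹ ≤ (Real.sqrt s)⁻¹ - 1 :=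
    Real.log_le_sub_one_of_pos (by positivity)
  rw [Real.log_inv] at h2
  have h3 : s ^ (-(1/2) : ℝ) = (Real.sqrt s)⁻¹ := by
    rw [show (-(1/2) : ℝ) = -(1/2) from rfl, Real.rpow_neg hs.le, ← Real.sqrt_eq_rpow]
  rw [h3]
  nlinarith [h2, hsq]

lemma rpow_neg_base {t : ℝ} (ht : t < 0) : t ^ (-(1/2) : ℝ) = 0 := by
  rw [Real.rpow_def_of_neg ht]
  have : Real.cos ((-(1/2) : ℝ) * π) = 0 := by
    rw [show (-(1/2) : ℝ) * π = -(π/2) by ring, Real.cos_neg, Real.cos_pi_div_two]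
  rw [this, mul_zero]

lemma abs_rpow_split (t : ℝ) :
    |t| ^ (-(1/2) : ℝ) ≤ t ^ (-(1/2) : ℝ) + (-t) ^ (-(1/2) : ℝ) := by
  rcases lt_trichotomy t 0 with h | h | h
  · rw [abs_of_neg h, rpow_neg_base h]
    simp
  · subst h; simp [Real.zero_rpow (show (-(1/2) : ℝ) ≠ 0 by norm_num)]
  · rw [abs_of_pos h, rpow_neg_base (show -t < 0 by linarith)]
    simp

lemma G_lintegral_le {δ K : ℝ} (hδ : 0 < δ) (hK : 0 ≤ K) :
    ∫⁻ t : ℝ, (Set.Ioo (-δ) δ).indicator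
      (fun s => ENNReal.ofReal (K * |s| ^ (-(1/2) : ℝ))) t
      ≤ ENNReal.ofReal (K * (2 * Real.sqrt δ)) * 2 := by
  have hmeas : Measurable fun t : ℝ => ENNReal.ofReal (K * t ^ (-(1/2) : ℝ)) := by
    measurability
  -- the one-sided integral
  have key : ∫⁻ t in Set.Ioo (-δ) δ, ENNReal.ofReal (K * t ^ (-(1/2) : ℝ))
      ≤ ENNReal.ofReal (K * (2 * Real.sqrt δ)) := by
    have hsub : Set.Ioo (-δ) δ ⊆ Set.Ioc (-δ) 0 ∪ Set.Ioo 0 δ := by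
      intro t ht
      rcases le_or_gt t 0 with h | h
      · exact Or.inl ⟨ht.1, h⟩
      · exact Or.inr ⟨h, ht.2⟩
    have h0 : ∫⁻ t in Set.Ioc (-δ) 0, ENNReal.ofReal (K * t ^ (-(1/2) : ℝ)) = 0 := by
      rw [setLIntegral_congr_fun measurableSet_Ioc
        (fun t ht => ?_), lintegral_zero]
      rcases lt_or_eq_of_le ht.2 with h | h
      · rw [rpow_neg_base h, mul_zero, ENNReal.ofReal_zero]
      · subst h; rw [Real.zero_rpow (by norm_num), mul_zero, ENNReal.ofReal_zero]
    have hInt : IntegrableOn (fun t : ℝ => K * t ^ (-(1/2) : ℝ)) (Set.Ioo 0 δ) volume := by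
      have h1 : IntervalIntegrable (fun t : ℝ => t ^ (-(1/2) : ℝ)) volume 0 δ :=
        intervalIntegral.intervalIntegrable_rpow' (by norm_num)
      have h2 := (intervalIntegrable_iff_integrableOn_Ioc_of_le hδ.le).mp h1
      exact (h2.mono_set Set.Ioo_subset_Ioc_self).const_mul K
    have hnn : 0 ≤ᶠ[ae (volume.restrict (Set.Ioo 0 δ))] fun t : ℝ => K * t ^ (-(1/2) : ℝ) := by
      refine Filter.Eventually.of_forall (fun t => ?_)
      show (0:ℝ) ≤ K * t ^ (-(1/2) : ℝ)
      rcases le_or_gt 0 t with h | h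
      · exact mul_nonneg hK (Real.rpow_nonneg h _)
      · rw [rpow_neg_base h, mul_zero]
    have hval : ∫ t in Set.Ioo 0 δ, K * t ^ (-(1/2) : ℝ) = K * (2 * Real.sqrt δ) := by
      rw [MeasureTheory.integral_const_mul]
      congr 1
      rw [← MeasureTheory.integral_Ioc_eq_integral_Ioo,
        ← intervalIntegral.integral_of_le hδ.le,
        integral_rpow (Or.inl (by norm_num))]
      rw [Real.zero_rpow (by norm_num), Real.sqrt_eq_rpow]
      norm_num
      ring
    have h2 : ∫⁻ t in Set.Ioo 0 δ, ENNReal.ofReal (K * t ^ (-(1/2) : ℝ))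
        = ENNReal.ofReal (K * (2 * Real.sqrt δ)) := by
      rw [← ofReal_integral_eq_lintegral_ofReal hInt hnn, hval]
    calc ∫⁻ t in Set.Ioo (-δ) δ, ENNReal.ofReal (K * t ^ (-(1/2) : ℝ))
        ≤ ∫⁻ t in Set.Ioc (-δ) 0 ∪ Set.Ioo 0 δ, ENNReal.ofReal (K * t ^ (-(1/2) : ℝ)) :=
          lintegral_mono_set hsub
      _ ≤ (∫⁻ t in Set.Ioc (-δ) 0, ENNReal.ofReal (K * t ^ (-(1/2) : ℝ)))
          + ∫⁻ t in Set.Ioo 0 δ, ENNReal.ofReal (K * t ^ (-(1/2) : ℝ)) :=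
          lintegral_union_le _ _ _
      _ = ENNReal.ofReal (K * (2 * Real.sqrt δ)) := by rw [h0, h2, zero_add]
  -- neg-reflected integral
  have hneg : ∫⁻ t in Set.Ioo (-δ) δ, ENNReal.ofReal (K * (-t) ^ (-(1/2) : ℝ))
      = ∫⁻ t in Set.Ioo (-δ) δ, ENNReal.ofReal (K * t ^ (-(1/2) : ℝ)) := by
    have himg : Neg.neg '' Set.Ioo (-δ) δ = Set.Ioo (-δ) δ := by
      ext t
      constructor
      · rintro ⟨s, hs, rfl⟩
        exact ⟨by simpa using neg_lt_neg hs.2, by simpa using neg_lt_neg hs.1⟩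
      · intro ht
        exact ⟨-t, ⟨by simpa using neg_lt_neg ht.2, by simpa using neg_lt_neg ht.1⟩, neg_neg t⟩
    have := (Measure.measurePreserving_neg (volume : Measure ℝ)).setLIntegral_comp_emb
      measurableEmbedding_neg (fun t => ENNReal.ofReal (K * t ^ (-(1/2) : ℝ)))
      (Set.Ioo (-δ) δ)
    rw [himg] at this
    exact this
  rw [lintegral_indicator measurableSet_Ioo]
  calc ∫⁻ t in Set.Ioo (-δ) δ, ENNReal.ofReal (K * |t| ^ (-(1/2) : ℝ))
      ≤ ∫⁻ t in Set.Ioo (-δ) δ,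
        (ENNReal.ofReal (K * t ^ (-(1/2) : ℝ)) + ENNReal.ofReal (K * (-t) ^ (-(1/2) : ℝ))) := by
        refine lintegral_mono (fun t => ?_)
        refine le_trans (ENNReal.ofReal_le_ofReal ?_) (ENNReal.ofReal_add_le)
        rw [← mul_add]
        exact mul_le_mul_of_nonneg_left (abs_rpow_split t) hK
    _ = (∫⁻ t in Set.Ioo (-δ) δ, ENNReal.ofReal (K * t ^ (-(1/2) : ℝ)))
        + ∫⁻ t in Set.Ioo (-δ) δ, ENNReal.ofReal (K * (-t) ^ (-(1/2) : ℝ)) :=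
        lintegral_add_left hmeas _
    _ = (∫⁻ t in Set.Ioo (-δ) δ, ENNReal.ofReal (K * t ^ (-(1/2) : ℝ)))
        + ∫⁻ t in Set.Ioo (-δ) δ, ENNReal.ofReal (K * t ^ (-(1/2) : ℝ)) := by rw [hneg]
    _ ≤ ENNReal.ofReal (K * (2 * Real.sqrt δ)) + ENNReal.ofReal (K * (2 * Real.sqrt δ)) :=
        add_le_add key key
    _ = ENNReal.ofReal (K * (2 * Real.sqrt δ)) * 2 := by rw [mul_two]

lemma pi_sq_le : π^2 ≤ 16 := by nlinarith [Real.pi_le_four, Real.pi_pos]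

end CK

set_option maxHeartbeats 1000000 in
/-- the arc-length measure of the circle of radius `R` centred at the
origin — the pushforward under `θ ↦ (R cos θ, R sin θ)` of `R` times Lebesgue
measure on `[0, 2π)` — belongs to the generalized Kato class. -/
theorem circle_measure_genKato (R : ℝ) (hR : 0 < R) :
    GenKatoClass
      (Measure.map
        (fun θ : ℝ => (EuclideanSpace.equiv (Fin 2) ℝ).symm ![R * Real.cos θ, R * Real.sin θ])
        ((ENNReal.ofReal R) • ((volume : Measure ℝ).restrict (Set.Ico 0 (2 * Real.pi))))) := by
  unfold GenKatoClass
  set f : ℝ → Plane :=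
    fun θ : ℝ => (EuclideanSpace.equiv (Fin 2) ℝ).symm ![R * Real.cos θ, R * Real.sin θ]
    with hfdef
  set K : ℝ := 2 * (R/4) ^ (-(1/2) : ℝ) with hKdef
  have hK0 : (0:ℝ) ≤ K := by rw [hKdef]; positivity
  set Φ : ℝ → ENNReal := fun ε =>
    ENNReal.ofReal R * (ENNReal.ofReal (K * (2 * Real.sqrt (4*ε/R))) * 2 * 2) with hΦdef
  have hΦ0 : Tendsto Φ (nhdsWithin 0 (Set.Ioi 0)) (nhds 0) := by
    have hc : Continuous fun ε : ℝ => K * (2 * Real.sqrt (4*ε/R)) := by fun_prop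
    have h1 : Tendsto (fun ε : ℝ => ENNReal.ofReal (K * (2 * Real.sqrt (4*ε/R))))
        (nhds 0) (nhds 0) := by
      have := (ENNReal.continuous_ofReal.comp hc).tendsto 0
      simpa [Function.comp_def] using this
    have h2 := ENNReal.Tendsto.mul_const (b := 2)
      (ENNReal.Tendsto.mul_const (b := 2) h1 (Or.inr (by norm_num))) (Or.inr (by norm_num))
    have h3 := ENNReal.Tendsto.const_mul (a := ENNReal.ofReal R) h2
      (Or.inr ENNReal.ofReal_ne_top)
    simp only [zero_mul, mul_zero] at h3
    exact h3.mono_left nhdsWithin_le_nhds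
  refine tendsto_of_tendsto_of_tendsto_of_le_of_le' tendsto_const_nhds hΦ0
    (Filter.Eventually.of_forall fun ε => zero_le) ?_
  have hmin : (0:ℝ) < min 1 (R/2) := by positivity
  filter_upwards [Ioo_mem_nhdsGT_of_mem (Set.left_mem_Ico.mpr hmin)] with ε hε
  obtain ⟨hε0, hεm⟩ := hε
  have hε1 : ε < 1 := lt_of_lt_of_le hεm (min_le_left _ _)
  have hεR : ε ≤ R/2 := (lt_of_lt_of_le hεm (min_le_right _ _)).le
  refine iSup_le fun x => ?_
  -- continuity / measurability of the parametrization
  have hfc : Continuous f := by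
    refine ((EuclideanSpace.equiv (Fin 2) ℝ).symm.continuous).comp ?_
    refine continuous_pi fun i => ?_
    fin_cases i <;> simp <;> fun_prop
  have hfm : Measurable f := hfc.measurable
  have hgm : Measurable fun y : Plane => ENNReal.ofReal |Real.log (dist x y)| :=
    ENNReal.measurable_ofReal.comp
      ((Real.measurable_log.comp (measurable_const.dist measurable_id)).abs)
  rw [setLIntegral_map measurableSet_ball hgm hfm, Measure.restrict_smul,
    lintegral_smul_measure, Measure.restrict_restrict (hfm measurableSet_ball)]
  rw [hΦdef]
  refine mul_le_mul_right ?_ _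
  -- set-up for the pointwise bound
  set δ : ℝ := 4*ε/R with hδdef
  have hδ0 : 0 < δ := by rw [hδdef]; positivity
  set z : ℂ := ⟨x 0, x 1⟩ with hzdef
  set θ₀ : ℝ := z.arg with hθ₀def
  set G : ℝ → ENNReal := fun s => (Set.Ioo (-δ) δ).indicator
    (fun s => ENNReal.ofReal (K * |s| ^ (-(1/2) : ℝ))) s with hGdef
  have hGm : Measurable G := by
    rw [hGdef]
    exact Measurable.indicator (by measurability) measurableSet_Ioo
  have key : ∀ θ, θ ∈ f ⁻¹' Metric.ball x ε ∩ Set.Ico 0 (2*π) → θ ≠ θ₀ → θ ≠ θ₀ + 2*π →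
      ENNReal.ofReal |Real.log (dist x (f θ))| ≤ G (θ - θ₀) + G (θ - (θ₀ + 2*π)) := by
    intro θ hθ hne0 hne1
    obtain ⟨hθB, hθI⟩ := hθ
    have hD : dist x (f θ) < ε := by
      have := hθB
      simp only [Set.mem_preimage, Metric.mem_ball] at this
      rwa [dist_comm] at this
    have hf0 : f θ 0 = R * Real.cos θ := rfl
    have hf1 : f θ 1 = R * Real.sin θ := rfl
    set D : ℝ := dist x (f θ) with hDdef
    have hD2 : D^2 = (x 0 - R * Real.cos θ)^2 + (x 1 - R * Real.sin θ)^2 := by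
      rw [hDdef, EuclideanSpace.dist_eq,
        Real.sq_sqrt (Finset.sum_nonneg fun i _ => sq_nonneg _)]
      simp [Fin.sum_univ_two, hf0, hf1, Real.dist_eq, sq_abs]
    set n : ℝ := ‖x‖ with hndef
    have hnx : n = Real.sqrt ((x 0)^2 + (x 1)^2) := by
      rw [hndef, EuclideanSpace.norm_eq]
      simp [Fin.sum_univ_two, Real.norm_eq_abs, sq_abs]
    have hnsq : n^2 = (x 0)^2 + (x 1)^2 := by
      rw [hnx]; exact Real.sq_sqrt (by positivity)
    have hnf : ‖f θ‖ = R := by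
      rw [EuclideanSpace.norm_eq]
      simp only [Fin.sum_univ_two, hf0, hf1, Real.norm_eq_abs, sq_abs]
      rw [show (R * Real.cos θ)^2 + (R * Real.sin θ)^2 = R^2 by
        have := Real.sin_sq_add_cos_sq θ; nlinarith]
      exact Real.sqrt_sq hR.le
    have htri : |n - R| ≤ D := by
      have h := abs_norm_sub_norm_le x (f θ)
      rwa [hnf, ← dist_eq_norm] at h
    have hn2 : R/2 ≤ n := by
      have h := abs_lt.mp (lt_of_le_of_lt htri hD)
      linarith
    have hn0 : 0 < n := by linarith
    have habs : ‖z‖ = n := by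
      rw [Complex.norm_def, hzdef, Complex.normSq_mk, hnx]; ring_nf
    have hz : z ≠ 0 := by
      intro h
      rw [h, norm_zero] at habs
      linarith
    have hcos : Real.cos θ₀ = x 0 / n := by
      have h := Complex.cos_arg hz
      rwa [habs] at h
    have hsin : Real.sin θ₀ = x 1 / n := by
      have h := Complex.sin_arg z
      rwa [habs] at h
    have hx0 : x 0 = n * Real.cos θ₀ := by rw [hcos]; field_simp
    have hx1 : x 1 = n * Real.sin θ₀ := by rw [hsin]; field_simp
    have hkey : D^2 = n^2 + R^2 - 2*R*n*Real.cos (θ - θ₀) := by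
      rw [hD2, hx0, hx1, Real.cos_sub]
      have h1 := Real.sin_sq_add_cos_sq θ
      have h2 := Real.sin_sq_add_cos_sq θ₀
      linear_combination n^2 * h2 + R^2 * h1
    set t : ℝ := if θ - θ₀ ≤ π then θ - θ₀ else θ - θ₀ - 2*π with htdef
    have hcost : Real.cos (θ - θ₀) = Real.cos t := by
      rw [htdef]
      split_ifs with h
      · rfl
      · rw [Real.cos_sub_two_pi]
    have hθ₀lo := Complex.neg_pi_lt_arg z
    have hθ₀hi := Complex.arg_le_pi z
    obtain ⟨hθ0, hθ2π⟩ := hθI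
    have habs_t : |t| ≤ π := by
      rw [htdef]
      split_ifs with h <;> (rw [abs_le]; constructor) <;> linarith [Real.pi_pos]
    have ht_ne : t ≠ 0 := by
      rw [htdef]
      split_ifs with h
      · exact sub_ne_zero.mpr hne0
      · intro h0
        exact hne1 (by linarith)
    have hu0 : 0 < |t| := abs_pos.mpr ht_ne
    have hsin_half : 2/π * (|t|/2) ≤ Real.sin (|t|/2) :=
      Real.mul_le_sin (by positivity) (by linarith)
    have hS0 : 0 ≤ Real.sin (|t|/2) := le_trans (by positivity) hsin_half
    have hsq_eq : Real.sin (|t|/2)^2 = Real.sin (t/2)^2 := by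
      rcases abs_cases t with ⟨h, _⟩ | ⟨h, _⟩
      · rw [h]
      · rw [h, neg_div, Real.sin_neg]; ring
    have hhalf : Real.sin (t/2)^2 = 1/2 - Real.cos t / 2 := by
      have h := Real.sin_sq_eq_half_sub (t/2)
      rwa [show 2*(t/2) = t by ring] at h
    have hS2 : (|t|/π)^2 ≤ Real.sin (|t|/2)^2 := by
      have h := mul_self_le_mul_self (show (0:ℝ) ≤ 2/π * (|t|/2) by positivity) hsin_half
      calc (|t|/π)^2 = (2/π * (|t|/2)) * (2/π * (|t|/2)) := by ring
        _ ≤ Real.sin (|t|/2) * Real.sin (|t|/2) := h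
        _ = Real.sin (|t|/2)^2 := by ring
    have hπ16 : π^2 ≤ 16 := CK.pi_sq_le
    have hπ2 : |t|^2/16 ≤ (|t|/π)^2 := by
      rw [div_pow]
      exact div_le_div_of_nonneg_left (sq_nonneg _) (by positivity) hπ16
    have hS216 : |t|^2/16 ≤ Real.sin (|t|/2)^2 := le_trans hπ2 hS2
    have hkey' : D^2 = n^2 + R^2 - 2*R*n*Real.cos t := by rw [hkey, hcost]
    have hcost2 : Real.cos t = 1 - 2 * Real.sin (|t|/2)^2 := by
      rw [hsq_eq]; linarith only [hhalf]
    have e0 : 2*R^2 ≤ 4*R*n := by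
      calc 2*R^2 = 4*R*(R/2) := by ring
        _ ≤ 4*R*n := mul_le_mul_of_nonneg_left hn2 (by positivity)
    have e1 : 2*R^2 * (|t|^2/16) ≤ 4*R*n * Real.sin (|t|/2)^2 :=
      mul_le_mul e0 hS216 (by positivity) (by positivity)
    have hDsq : D^2 = (n-R)^2 + 4*R*n*Real.sin (|t|/2)^2 := by
      rw [hkey', hcost2]; ring
    have h1 : (R/4*|t|)^2 ≤ D^2 := by
      linarith only [hDsq, e1, sq_nonneg (n-R), mul_nonneg (sq_nonneg R) (sq_nonneg |t|)]
    have hDlow : R/4 * |t| ≤ D := by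
      have hD0 : (0:ℝ) ≤ D := dist_nonneg
      have h2 := Real.sqrt_le_sqrt h1
      rwa [Real.sqrt_sq (by positivity), Real.sqrt_sq hD0] at h2
    have hδt : |t| < δ := by
      have h2 : R/4 * |t| < ε := lt_of_le_of_lt hDlow hD
      rw [hδdef, lt_div_iff₀ hR]
      linarith only [h2]
    have hD_pos : 0 < D := lt_of_lt_of_le (by positivity) hDlow
    have hlogD : |Real.log D| = -Real.log D :=
      abs_of_neg (Real.log_neg hD_pos (lt_trans hD hε1))
    have hlog_le : -Real.log D ≤ K * |t| ^ (-(1/2) : ℝ) := by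
      have ha : -Real.log D ≤ -Real.log (R/4 * |t|) :=
        neg_le_neg (Real.log_le_log (by positivity) hDlow)
      have hb := CK.neg_log_le_rpow (show (0:ℝ) < R/4 * |t| by positivity)
      have hc : (R/4 * |t|) ^ (-(1/2) : ℝ)
          = (R/4) ^ (-(1/2) : ℝ) * |t| ^ (-(1/2) : ℝ) :=
        Real.mul_rpow (by positivity) (abs_nonneg t)
      rw [hc] at hb
      rw [hKdef]
      calc -Real.log D ≤ -Real.log (R/4 * |t|) := ha
        _ ≤ 2 * ((R/4) ^ (-(1/2) : ℝ) * |t| ^ (-(1/2) : ℝ)) := hb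
        _ = 2 * (R/4) ^ (-(1/2) : ℝ) * |t| ^ (-(1/2) : ℝ) := by ring
    have hGt : ENNReal.ofReal |Real.log D| ≤ G t := by
      have hmem : t ∈ Set.Ioo (-δ) δ := by
        obtain ⟨h1', h2'⟩ := abs_lt.mp hδt
        exact ⟨h1', h2'⟩
      rw [hlogD]
      simp only [hGdef]
      rw [Set.indicator_of_mem hmem]
      exact ENNReal.ofReal_le_ofReal hlog_le
    refine le_trans hGt ?_
    rw [htdef]
    split_ifs with h
    · exact self_le_add_right _ _
    · rw [show θ - θ₀ - 2*π = θ - (θ₀ + 2*π) by ring]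
      exact self_le_add_left _ _
  -- assemble
  have hae : ∀ᵐ θ : ℝ ∂volume, θ ∈ f ⁻¹' Metric.ball x ε ∩ Set.Ico 0 (2*π) →
      ENNReal.ofReal |Real.log (dist x (f θ))| ≤ G (θ - θ₀) + G (θ - (θ₀ + 2*π)) := by
    filter_upwards [measure_eq_zero_iff_ae_notMem.mp (measure_singleton θ₀),
      measure_eq_zero_iff_ae_notMem.mp (measure_singleton (θ₀ + 2*π))] with θ h1 h2 hθ
    exact key θ hθ (by simpa using h1) (by simpa using h2)
  have hGshift : ∀ a : ℝ, ∫⁻ θ : ℝ, G (θ - a) = ∫⁻ s : ℝ, G s := by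
    intro a
    simp only [sub_eq_add_neg]
    exact lintegral_add_right_eq_self G (-a)
  have hGle : ∫⁻ s : ℝ, G s ≤ ENNReal.ofReal (K * (2 * Real.sqrt δ)) * 2 := by
    rw [hGdef]
    exact CK.G_lintegral_le hδ0 hK0
  calc ∫⁻ θ in f ⁻¹' Metric.ball x ε ∩ Set.Ico 0 (2*π),
        ENNReal.ofReal |Real.log (dist x (f θ))|
      ≤ ∫⁻ θ in f ⁻¹' Metric.ball x ε ∩ Set.Ico 0 (2*π),
        (G (θ - θ₀) + G (θ - (θ₀ + 2*π))) := by
        refine setLIntegral_mono_ae ?_ hae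
        exact ((hGm.comp (measurable_id.sub measurable_const)).add
          (hGm.comp (measurable_id.sub measurable_const))).aemeasurable
    _ ≤ ∫⁻ θ : ℝ, (G (θ - θ₀) + G (θ - (θ₀ + 2*π))) := setLIntegral_le_lintegral _ _
    _ = (∫⁻ θ : ℝ, G (θ - θ₀)) + ∫⁻ θ : ℝ, G (θ - (θ₀ + 2*π)) :=
        lintegral_add_left (hGm.comp (measurable_id.sub measurable_const)) _
    _ = (∫⁻ s : ℝ, G s) + ∫⁻ s : ℝ, G s := by rw [hGshift, hGshift]
    _ ≤ ENNReal.ofReal (K * (2 * Real.sqrt δ)) * 2 + ENNReal.ofReal (K * (2 * Real.sqrt δ)) * 2 :=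
        add_le_add hGle hGle
    _ = ENNReal.ofReal (K * (2 * Real.sqrt δ)) * 2 * 2 := by ring
    _ = ENNReal.ofReal (K * (2 * Real.sqrt (4*ε/R))) * 2 * 2 := by rw [hδdef]
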